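/- Let φ be a 3-SAT instance with |L| ≥ 2 clauses over V variables, and let (x, z, y) be a feasible solution of the associated DRP instance I(φ). Then there exists exactly one index k ∈ {1,…,6|L|+1} such that (x_k)_{V+l} = 1 for every l ∈ {1,…,|L|}. -/

import Mathlib

/-- A decision tree over `M` binary attributes: a finite rooted full binary tree
whose internal nodes carry attribute labels in `Fin M`. -/
inductive DTree (M : ℕ) : Type where
  | leaf : DTree M
  | node (f : Fin M) (l r : DTree M) : DTree M

namespace DTree

/-- The leaves of a decision tree, identified by their root-to-leaf paths
(`false` = left branch, i.e. attribute value 0; `true` = right branch, i.e. value 1). -/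
def leaves {M : ℕ} : DTree M → Finset (List Bool)
  | .leaf => {[]}
  | .node _ l r => (l.leaves.image (List.cons false)) ∪ (r.leaves.image (List.cons true))

/-- `Φ⁺(v)`: the attributes forced to value 1 on the root-to-`v` path. -/
def phiPos {M : ℕ} : DTree M → List Bool → Finset (Fin M)
  | .node f _ r, true :: p => insert f (r.phiPos p)
  | .node _ l _, false :: p => l.phiPos p
  | _, _ => ∅

/-- `Φ⁻(v)`: the attributes forced to value 0 on the root-to-`v` path. -/
def phiNeg {M : ℕ} : DTree M → List Bool → Finset (Fin M)
  | .node f l _, false :: p => insert f (l.phiNeg p)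
  | .node _ _ r, true :: p => r.phiNeg p
  | _, _ => ∅

end DTree

/-- A DRP (dataset reconstruction problem) instance: a finite forest of decision
trees over `M` binary attributes, counts `n_{t,v,c}` for every tree `t`, node `v`
(identified by its path) and class `c : C`, and a set `B ⊆ ℕ`. -/
structure DRP (C : Type) (N M : ℕ) where
  numTrees : ℕ
  tree : Fin numTrees → DTree M
  count : Fin numTrees → List Bool → C → ℕ
  B : Set ℕ

/-- Feasibility of a solution `(x, z, y)` of a DRP instance. -/
def IsFeasible {C : Type} [DecidableEq C] {N M : ℕ} (D : DRP C N M)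
    (x : Fin N → Fin M → Bool) (z : Fin N → C)
    (y : Fin D.numTrees → List Bool → Fin N → ℕ) : Prop :=
  (∀ t (k : Fin N), (∑ v ∈ (D.tree t).leaves, y t v k) ∈ D.B) ∧
  (∀ t, ∀ v ∈ (D.tree t).leaves, ∀ c : C,
      (∑ k ∈ Finset.univ.filter (fun k : Fin N => z k = c), y t v k) = D.count t v c) ∧
  (∀ t, ∀ v ∈ (D.tree t).leaves, ∀ k : Fin N, 0 < y t v k →
      (∀ i ∈ (D.tree t).phiPos v, x k i = true) ∧
      (∀ i ∈ (D.tree t).phiNeg v, x k i = false))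

/-- A literal over `V` boolean variables: a variable index together with a polarity
(`true` = the variable itself, `false` = its negation). -/
abbrev Lit (V : ℕ) := Fin V × Bool

/-- A 3-clause: a disjunction of three literals. -/
abbrev Clause3 (V : ℕ) := Lit V × Lit V × Lit V

/-- A 3-SAT instance over `V` variables: a finite list of 3-clauses. -/
abbrev CNF3 (V : ℕ) := List (Clause3 V)

def litSat {V : ℕ} (u : Fin V → Bool) (l : Lit V) : Prop := u l.1 = l.2

def clauseSat {V : ℕ} (u : Fin V → Bool) (cl : Clause3 V) : Prop :=
  litSat u cl.1 ∨ litSat u cl.2.1 ∨ litSat u cl.2.2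

/-- Satisfiability of a 3-SAT instance. -/
def Satisfiable {V : ℕ} (φ : CNF3 V) : Prop := ∃ u : Fin V → Bool, ∀ cl ∈ φ, clauseSat u cl

/-- Attribute `j ∈ {1,…,V}` among the `V + L` attributes of the construction. -/
def varAttr {V : ℕ} (L : ℕ) (j : Fin V) : Fin (V + L) := Fin.castAdd L j

/-- Attribute `V + l` among the `V + L` attributes of the construction. -/
def clauseAttr {V : ℕ} (L : ℕ) (l : Fin L) : Fin (V + L) := Fin.natAdd V l

/-- Perfect binary tree of depth 3 branching successively on attributes `a`, `b`, `c`. -/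
def perfect3 {M : ℕ} (a b c : Fin M) : DTree M :=
  .node a
    (.node b (.node c .leaf .leaf) (.node c .leaf .leaf))
    (.node b (.node c .leaf .leaf) (.node c .leaf .leaf))

/-- The tree associated with clause `l`: the root branches on attribute `V + l`, its left
child is a leaf, and its right subtree is a perfect binary tree of depth 3 branching
successively on the three variables of the clause. -/
def clauseTree {V : ℕ} (L : ℕ) (l : Fin L) (cl : Clause3 V) : DTree (V + L) :=
  .node (clauseAttr L l) .leaf
    (perfect3 (varAttr L cl.1.1) (varAttr L cl.2.1.1) (varAttr L cl.2.2.1))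

/-- Counts for the tree of clause `cl`: the left leaf carries `6|L| - 6`; the eight leaves
of the perfect subtree correspond to the eight 0/1 assignments of the clause's variables
and carry 1 if the assignment satisfies the clause, 0 otherwise. -/
def clauseCount {V : ℕ} (L : ℕ) (cl : Clause3 V) : List Bool → ℕ
  | [false] => 6 * L - 6
  | [true, b1, b2, b3] =>
      if b1 = cl.1.2 ∨ b2 = cl.2.1.2 ∨ b3 = cl.2.2.2 then 1 else 0
  | _ => 0

/-- A right chain: each listed attribute gives an internal node on the rightmost path
whose left child is a leaf. -/
def rightChain {M : ℕ} : List (Fin M) → DTree M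
  | [] => .leaf
  | f :: fs => .node f .leaf (rightChain fs)

/-- The auxiliary tree: its right path has, at each depth `d ∈ {0,…,L-1}`, an internal
node branching on attribute `V + d + 1`. -/
def auxTree (V L : ℕ) : DTree (V + L) :=
  rightChain ((List.finRange L).map (clauseAttr L))

/-- Counts for the auxiliary tree: the left leaf at depth 1 carries `6L - 6`, the left
leaf at depth 2 carries `6`, the other left leaves carry `0`, and the rightmost leaf
(at depth `L`) carries `1`. -/
def auxCount (L : ℕ) (p : List Bool) : ℕ :=
  if p = [false] then 6 * L - 6
  else if p = [true, false] then 6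
  else if p = List.replicate L true then 1
  else 0

/-- The DRP instance `I(φ)` associated with a 3-SAT instance `φ`: a single class,
`N = 6|L| + 1` examples, `M = V + |L|` binary attributes, `B = {1}`, one tree per
clause plus the auxiliary tree. -/
def drpOf {V : ℕ} (φ : CNF3 V) : DRP Unit (6 * φ.length + 1) (V + φ.length) where
  numTrees := φ.length + 1
  tree := fun t =>
    if h : (t : ℕ) < φ.length then clauseTree φ.length ⟨t, h⟩ (φ.get ⟨t, h⟩)
    else auxTree V φ.length
  count := fun t p _ =>
    if h : (t : ℕ) < φ.length then clauseCount φ.length (φ.get ⟨t, h⟩) p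
    else auxCount φ.length p
  B := {1}

lemma sum_eq_one_existsUnique {N : ℕ} (f : Fin N → ℕ)
    (h : ∑ k, f k = 1) : ∃! k, 0 < f k := by
  obtain ⟨k, hk⟩ : ∃ k, f k ≠ 0 := by
    by_contra hc
    push_neg at hc
    simp [hc] at h
  refine ⟨k, Nat.pos_of_ne_zero hk, fun j hj => ?_⟩
  by_contra hne
  have h2 : 2 ≤ ∑ i, f i := by
    calc 2 ≤ f j + f k := by omega
    _ = ∑ i ∈ ({j, k} : Finset (Fin N)), f i := (Finset.sum_pair hne).symm
    _ ≤ ∑ i, f i := Finset.sum_le_sum_of_subset (Finset.subset_univ _)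
  omega

lemma rep_mem_leaves {M : ℕ} (fs : List (Fin M)) :
    List.replicate fs.length true ∈ (rightChain fs).leaves := by
  induction fs with
  | nil => simp [rightChain, DTree.leaves]
  | cons f fs ih =>
    simp only [List.length_cons, List.replicate_succ, rightChain, DTree.leaves,
      Finset.mem_union, Finset.mem_image]
    exact Or.inr ⟨_, ih, rfl⟩

lemma mem_phiPos_rep {M : ℕ} (fs : List (Fin M)) {a : Fin M} (ha : a ∈ fs) :
    a ∈ (rightChain fs).phiPos (List.replicate fs.length true) := by
  induction fs with
  | nil => simp at ha
  | cons f fs ih =>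
    simp only [List.length_cons, List.replicate_succ, rightChain, DTree.phiPos,
      Finset.mem_insert]
    rcases List.mem_cons.1 ha with h | h
    · exact Or.inl h
    · exact Or.inr (ih h)

lemma leaves_cases {M : ℕ} (fs : List (Fin M)) {v : List Bool}
    (hv : v ∈ (rightChain fs).leaves) :
    v = List.replicate fs.length true ∨
      ∃ a ∈ fs, a ∈ (rightChain fs).phiNeg v := by
  induction fs generalizing v with
  | nil =>
    simp [rightChain, DTree.leaves] at hv
    exact Or.inl (by simp [hv])
  | cons f fs ih =>
    simp only [rightChain, DTree.leaves, Finset.mem_union, Finset.mem_image] at hv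
    rcases hv with ⟨w, hw, rfl⟩ | ⟨w, hw, rfl⟩
    · simp only [DTree.leaves, Finset.mem_singleton] at hw
      subst hw
      exact Or.inr ⟨f, List.mem_cons_self, by simp [rightChain, DTree.phiNeg]⟩
    · rcases ih hw with h | ⟨a, ha, hph⟩
      · exact Or.inl (by simp [h, List.replicate_succ])
      · exact Or.inr ⟨a, List.mem_cons_of_mem _ ha, by simpa [rightChain, DTree.phiNeg] using hph⟩

/-- In any feasible solution `(x, z, y)` of the DRP instance `I(φ)` associated with a
3-SAT instance `φ` with `|L| ≥ 2` clauses over `V` variables, there exists exactly one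
index `k` such that `(x_k)_{V+l} = 1` for every `l ∈ {1,…,|L|}`. -/
theorem existsUnique_allOnes_example {V : ℕ} (φ : CNF3 V) (hL : 2 ≤ φ.length)
    (x : Fin (6 * φ.length + 1) → Fin (V + φ.length) → Bool)
    (z : Fin (6 * φ.length + 1) → Unit)
    (y : Fin (drpOf φ).numTrees → List Bool → Fin (6 * φ.length + 1) → ℕ)
    (hfeas : IsFeasible (drpOf φ) x z y) :
    ∃! k : Fin (6 * φ.length + 1), ∀ l : Fin φ.length, x k (clauseAttr φ.length l) = true := by
  classical
  have htlt : φ.length < (drpOf φ).numTrees := Nat.lt_succ_self φ.length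
  set t0 : Fin (drpOf φ).numTrees := ⟨φ.length, htlt⟩ with ht0
  have hnotlt : ¬ ((t0 : ℕ) < φ.length) := by simp [ht0]
  have htree : (drpOf φ).tree t0 = auxTree V φ.length := by
    simp [drpOf, dif_neg hnotlt]
  set fs := (List.finRange φ.length).map (clauseAttr (V := V) φ.length) with hfs
  have hfslen : fs.length = φ.length := by simp [hfs]
  have hchain : auxTree V φ.length = rightChain fs := rfl
  set vtop := List.replicate φ.length true with hvtop
  have hvleaf : vtop ∈ ((drpOf φ).tree t0).leaves := by
    rw [htree, hchain, hvtop]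
    have := rep_mem_leaves fs
    rwa [hfslen] at this
  have hne1 : vtop ≠ [false] := by
    intro h
    have : (false : Bool) ∈ vtop := by rw [h]; simp
    rw [hvtop] at this
    exact absurd (List.eq_of_mem_replicate this) (by simp)
  have hne2 : vtop ≠ [true, false] := by
    intro h
    have : (false : Bool) ∈ vtop := by rw [h]; simp
    rw [hvtop] at this
    exact absurd (List.eq_of_mem_replicate this) (by simp)
  have hcount : (drpOf φ).count t0 vtop () = 1 := by
    show (if h : (t0 : ℕ) < φ.length then _ else auxCount φ.length vtop) = 1
    rw [dif_neg hnotlt]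
    rw [auxCount, if_neg hne1, if_neg hne2, if_pos hvtop]
  have hfilter : Finset.univ.filter (fun k : Fin (6 * φ.length + 1) => z k = ()) = Finset.univ := by
    apply Finset.filter_true_of_mem
    intro k _
    exact Subsingleton.elim _ _
  have hsum : ∑ k, y t0 vtop k = 1 := by
    have h := hfeas.2.1 t0 vtop hvleaf ()
    rw [hfilter] at h
    rw [h, hcount]
  obtain ⟨k0, hk0, huniq⟩ := sum_eq_one_existsUnique _ hsum
  -- attributes clauseAttr φ.length l are in fs and in phiPos at vtop
  have hmemfs : ∀ l : Fin φ.length, clauseAttr (V := V) φ.length l ∈ fs := by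
    intro l
    rw [hfs]
    exact List.mem_map_of_mem (List.mem_finRange l)
  have hpos_attr : ∀ l : Fin φ.length,
      clauseAttr (V := V) φ.length l ∈ ((drpOf φ).tree t0).phiPos vtop := by
    intro l
    rw [htree, hchain, hvtop]
    have := mem_phiPos_rep fs (hmemfs l)
    rwa [hfslen] at this
  have hx0 : ∀ l : Fin φ.length, x k0 (clauseAttr φ.length l) = true := by
    intro l
    exact (hfeas.2.2 t0 vtop hvleaf k0 hk0).1 _ (hpos_attr l)
  refine ⟨k0, hx0, ?_⟩
  intro k hk
  -- show y t0 vtop k > 0, hence k = k0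
  have hBk : ∑ v ∈ ((drpOf φ).tree t0).leaves, y t0 v k = 1 := by
    have := hfeas.1 t0 k
    simpa [drpOf] using this
  have hzero : ∀ v ∈ ((drpOf φ).tree t0).leaves, v ≠ vtop → y t0 v k = 0 := by
    intro v hv hne
    by_contra h
    have hpos : 0 < y t0 v k := Nat.pos_of_ne_zero h
    have hv' : v ∈ (rightChain fs).leaves := by rwa [htree, hchain] at hv
    rcases leaves_cases fs hv' with heq | ⟨a, ha, hph⟩
    · rw [hfslen] at heq; exact hne (heq.trans hvtop.symm)
    · obtain ⟨l, _, rfl⟩ := List.mem_map.1 (hfs ▸ ha)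
      have hfalse := (hfeas.2.2 t0 v hv k hpos).2 _ (by rw [htree, hchain]; exact hph)
      rw [hk l] at hfalse
      exact absurd hfalse (by simp)
  have hone : y t0 vtop k = 1 := by
    have := (Finset.sum_eq_single_of_mem vtop hvleaf
      (fun v hv hne => hzero v hv hne)).symm.trans hBk
    exact this
  exact huniq k (by omega)
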